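/- There exists a hereditary subshift X ⊆ {0,1}^ℕ with sublinear factor complexity (the number of length-n words in L(X) is O(n)) and infinite coding dimension, i.e., the sums Σx for x ∈ X are unbounded. -/

import Mathlib

open scoped BigOperators

/-- A language is regular if it is accepted by a DFA with finitely many states. -/
def IsRegularLang {α : Type*} (L : Set (List α)) : Prop :=
  ∃ (σ : Type) (_ : Fintype σ) (M : DFA α σ), ∀ w : List α, w ∈ M.accepts ↔ w ∈ L

/-- Pad a word over `A` to length `M` by prepending the padding symbol `none`. -/
def padOne {A : Type*} (M : ℕ) (w : List A) : List (Option A) :=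
  List.replicate (M - w.length) none ++ w.map some

/-- The padded form of a `d`-tuple of words over `A`, as a word over `(A ∪ {#})^d`. -/
def padTuple {A : Type*} {d : ℕ} (ws : Fin d → List A) : List (Fin d → Option A) :=
  List.ofFn fun j : Fin (Finset.univ.sup fun i : Fin d => (ws i).length) =>
    fun i : Fin d =>
      (padOne (Finset.univ.sup fun i : Fin d => (ws i).length) (ws i)).getD j.val none

/-- An abstract numeration system over the alphabet `A`, encoded by the order isomorphism
`rep : ℕ → L ⊆ A*` enumerating its (infinite) language in increasing order. -/
structure ANS (A : Type*) where
  rep : ℕ → List A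
  inj : Function.Injective rep

/-- A set `Y ⊆ ℕ^d` is `S`-recognizable if the padded representations of its members form
a regular language. -/
def ANS.Recognizable {A : Type*} (S : ANS A) {d : ℕ} (Y : Set (Fin d → ℕ)) : Prop :=
  IsRegularLang { w : List (Fin d → Option A) | ∃ t ∈ Y, w = padTuple fun i => S.rep (t i) }

/-- An ANS is addable if the graph of addition is `S`-recognizable. -/
def ANS.Addable {A : Type*} (S : ANS A) : Prop :=
  S.Recognizable { t : Fin 3 → ℕ | t 0 + t 1 = t 2 }

/-- An ANS is comparable if the relation `≤` is `S`-recognizable. -/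
def ANS.Comparable {A : Type*} (S : ANS A) : Prop :=
  S.Recognizable { t : Fin 2 → ℕ | t 0 ≤ t 1 }

/-- An ANS is regular if `ℕ` (i.e. its language) is `S`-recognizable. -/
def ANS.IsRegularANS {A : Type*} (S : ANS A) : Prop :=
  S.Recognizable (Set.univ : Set (Fin 1 → ℕ))

/-- The unary ANS, with language `0*` ordered by length. -/
def unaryANS : ANS Unit where
  rep := fun n => List.replicate n ()
  inj := fun m n h => by simpa using congrArg List.length h

/-- `x` is `S`-automatic: some DFAO outputs `x n` on input `rep_S n`. -/
def SAutomatic {A C : Type*} (S : ANS A) (x : ℕ → C) : Prop :=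
  ∃ (Q : Type) (_ : Fintype Q) (M : DFA A Q) (τ : Q → C),
    ∀ n : ℕ, τ (M.eval (S.rep n)) = x n

/-- The shift map on one-sided infinite words. -/
def shiftMap {C : Type*} (x : ℕ → C) : ℕ → C := fun n => x (n + 1)

/-- The orbit closure of `x` (closure in the product topology over the discrete alphabet):
`y` belongs to it iff every finite prefix of `y` occurs in `x`. -/
def orbitClosure {C : Type*} (x : ℕ → C) : Set (ℕ → C) :=
  { y | ∀ n : ℕ, ∃ m : ℕ, ∀ i < n, y i = x (m + i) }

/-- A subshift: a shift-invariant subset of `C^ℕ` that is closed in the product topology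
over the discrete alphabet (expressed combinatorially). -/
def IsSubshift {C : Type*} (X : Set (ℕ → C)) : Prop :=
  (∀ x ∈ X, shiftMap x ∈ X) ∧
  ∀ y : ℕ → C, (∀ n : ℕ, ∃ x ∈ X, ∀ i < n, y i = x i) → y ∈ X

/-- The language of a set of infinite words: all finite factors of its elements. -/
def LangOf {C : Type*} (X : Set (ℕ → C)) : Set (List C) :=
  { w | ∃ x ∈ X, ∃ p : ℕ, w = List.ofFn fun i : Fin w.length => x (p + i) }

/-- A word is right special in (the language of) `X` if it has two distinct one-letter
extensions in the language of `X`. -/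
def RightSpecial {C : Type*} (X : Set (ℕ → C)) (w : List C) : Prop :=
  ∃ a b : C, a ≠ b ∧ w ++ [a] ∈ LangOf X ∧ w ++ [b] ∈ LangOf X

/-- The factor complexity of `x`: the number of distinct factors of length `n`. -/
noncomputable def factorComplexity {C : Type*} (x : ℕ → C) (n : ℕ) : ℕ :=
  Set.ncard { w : List C | ∃ p : ℕ, w = List.ofFn fun i : Fin n => x (p + i) }

/-- `T` is a strategy tree witnessing `α ∈ W(X)`: a prefix-closed set of finite words
containing the empty word, in which every word of length `i` has exactly `α i + 1`
one-letter extensions, and all whose infinite branches lie in `X`. -/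
def IsStrategyTree {C : Type*} (X : Set (ℕ → C)) (α : ℕ → ℕ) (T : Set (List C)) : Prop :=
  ([] : List C) ∈ T ∧
  (∀ u v : List C, u ++ v ∈ T → u ∈ T) ∧
  (∀ w ∈ T, Set.ncard { c : C | w ++ [c] ∈ T } = α w.length + 1) ∧
  (∀ y : ℕ → C, (∀ n : ℕ, (List.ofFn fun i : Fin n => y i) ∈ T) → y ∈ X)

/-- The winning shift of `X ⊆ C^ℕ`, a subset of `ℕ^ℕ`. -/
def winningShift {C : Type*} (X : Set (ℕ → C)) : Set (ℕ → ℕ) :=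
  { α | ∃ T : Set (List C), IsStrategyTree X α T }

/-- Membership in the winning set of a set `X` of finite words, defined recursively:
`ε ∈ W(X)` iff `ε ∈ X`, and `a :: α ∈ W(X)` iff there is a set of `a + 1` letters `c`
such that `α` is in the winning set of the left quotient of `X` by `c`. -/
def winningSetMem {C : Type*} : List ℕ → Set (List C) → Prop
  | [], X => [] ∈ X
  | a :: α, X => ∃ S : Finset C, S.card = a + 1 ∧ ∀ c ∈ S, winningSetMem α { w | c :: w ∈ X }

/-- `Σ y = m`: the sum of the letters of `y ∈ ℕ^ℕ` is finite and equals `m`. -/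
def sumEq (y : ℕ → ℕ) (m : ℕ) : Prop :=
  (Function.support y).Finite ∧ ∑ᶠ i, y i = m

/-- `Y ⊆ ℕ^ℕ` has finite coding dimension: the sums `Σ y`, `y ∈ Y`, are uniformly bounded. -/
def FiniteCodingDim (Y : Set (ℕ → ℕ)) : Prop :=
  ∃ d : ℕ, ∀ y ∈ Y, ∀ F : Finset ℕ, ∑ i ∈ F, y i ≤ d

/-- The set `{ν(y) : y ∈ Y, Σy = k} ⊆ ℕᵏ`: nondecreasing `k`-tuples `t` such that the word
whose letter at `j` is the number of occurrences of `j` in `t` belongs to `Y`. -/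
def nuSet (Y : Set (ℕ → ℕ)) (k : ℕ) : Set (Fin k → ℕ) :=
  { t | Monotone t ∧ (fun j => Set.ncard { i : Fin k | t i = j }) ∈ Y }

/-- `Y ⊆ ℕ^ℕ` is weakly `S`-codable if `{ν(y) : y ∈ Y, Σy = k}` is `S`-recognizable for
every `k`. -/
def WeaklySCodable {A : Type*} (S : ANS A) (Y : Set (ℕ → ℕ)) : Prop :=
  ∀ k : ℕ, S.Recognizable (nuSet Y k)

/-- `Y ⊆ ℕ^ℕ` is `S`-codable if it is weakly `S`-codable and has finite coding dimension. -/
def SCodable {A : Type*} (S : ANS A) (Y : Set (ℕ → ℕ)) : Prop :=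
  WeaklySCodable S Y ∧ FiniteCodingDim Y

/-- `P_{111}(Y)`: strictly increasing triples `(a, b, c)` such that the word with letter `1`
exactly at positions `a`, `b`, `c` and `0` elsewhere belongs to `Y`. -/
def P111 (Y : Set (ℕ → ℕ)) : Set (Fin 3 → ℕ) :=
  { t | t 0 < t 1 ∧ t 1 < t 2 ∧
        (fun j => if j = t 0 ∨ j = t 1 ∨ j = t 2 then 1 else 0) ∈ Y }

/-- `P_v(Y)` for a finite word `v` over `ℕ`: strictly increasing tuples `n` such that the
word with letter `v i` at position `n i` and `0` elsewhere belongs to `Y`. -/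
def PvSet (v : List ℕ) (Y : Set (ℕ → ℕ)) : Set (Fin v.length → ℕ) :=
  { n | StrictMono n ∧
        (fun j => ∑ i : Fin v.length, if n i = j then v.get i else 0) ∈ Y }

/-- `X` is sofic: the set of label sequences of right-infinite paths in a finite
edge-labeled graph. -/
def IsSofic {C : Type*} (X : Set (ℕ → C)) : Prop :=
  ∃ (V : Type) (_ : Fintype V) (E : Set (V × C × V)),
    X = { x | ∃ p : ℕ → V, ∀ n : ℕ, (p n, x n, p (n + 1)) ∈ E }

/-- The factor `x[a..b-1]` of an infinite word. -/
def segmentOf {C : Type*} (x : ℕ → C) (a b : ℕ) : List C :=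
  List.ofFn fun i : Fin (b - a) => x (a + i)

/-- `U · V^ω`: infinite words that decompose as a word of `U` followed by infinitely many
nonempty words of `V`. -/
def omegaIter {C : Type*} (U V : Set (List C)) : Set (ℕ → C) :=
  { x | ∃ k : ℕ → ℕ, StrictMono k ∧ segmentOf x 0 (k 0) ∈ U ∧
        ∀ i : ℕ, segmentOf x (k i) (k (i + 1)) ∈ V }

/-- `X ⊆ C^ℕ` is ω-regular: a finite union of sets `U · V^ω` with `U`, `V` regular. -/
def IsOmegaRegular {C : Type*} (X : Set (ℕ → C)) : Prop :=
  ∃ (n : ℕ) (U V : Fin n → Set (List C)),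
    (∀ i, IsRegularLang (U i) ∧ IsRegularLang (V i)) ∧
    X = ⋃ i, omegaIter (U i) (V i)

/-- The words `p₁ = a`, `p_{k+1} = p_k bᵏ p_k` (with `a = false`, `b = true`). -/
def pWord : ℕ → List Bool
  | 0 => []
  | 1 => [false]
  | (k + 2) => pWord (k + 1) ++ List.replicate (k + 1) true ++ pWord (k + 1)

/-- Combinatorial continuity of `φ` on `Y` for product topologies over discrete alphabets:
every finite prefix of `φ y` is determined by a finite prefix of `y`. -/
def ContOn {B C : Type*} (φ : (ℕ → B) → (ℕ → C)) (Y : Set (ℕ → B)) : Prop :=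
  ∀ y ∈ Y, ∀ n : ℕ, ∃ m : ℕ, ∀ y' ∈ Y, (∀ i < m, y' i = y i) → ∀ i < n, φ y' i = φ y i

def myX : Set (ℕ → ℕ) :=
  { x | (∀ i, x i ≤ 1) ∧ ∀ N : ℕ, ∃ m : ℕ, ∀ i, i < N → x i = 1 → ∃ k, i + m = 4 ^ k }

def wordOne (n q : ℕ) : List ℕ := List.ofFn fun i : Fin n => if (i : ℕ) = q then 1 else 0

def wordMany (n t : ℕ) (A : Finset ℕ) : List ℕ :=
  List.ofFn fun i : Fin n => if ∃ k ∈ A, (i : ℕ) + t = 4 ^ k then 1 else 0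

def coverF (n K : ℕ) : Finset (List ℕ) :=
  (Finset.range (n+1)).image (wordOne n) ∪
  (Finset.range (K+1)).biUnion fun k₁ =>
    ((Finset.range (4 ^ k₁ + 1)) ×ˢ (Finset.Ioc k₁ K).powerset).image fun tB =>
      wordMany n tB.1 (insert k₁ tB.2)

lemma sum_bound : ∀ K : ℕ, (∑ k ∈ Finset.range (K+1), (4 ^ k + 1) * 2 ^ (K - k)) ≤ 4 * 4 ^ K := by
  intro K
  induction K with
  | zero => simp
  | succ K ih =>
    rw [Finset.sum_range_succ]
    have h1 : ∀ k ∈ Finset.range (K+1), (4 ^ k + 1) * 2 ^ (K + 1 - k) = 2 * ((4 ^ k + 1) * 2 ^ (K - k)) := by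
      intro k hk
      rw [Finset.mem_range] at hk
      have h : K + 1 - k = (K - k) + 1 := by omega
      rw [h, pow_succ]; ring
    rw [Finset.sum_congr rfl h1, ← Finset.mul_sum]
    have h2 : (1:ℕ) ≤ 4 ^ K := Nat.one_le_pow _ _ (by norm_num)
    have h3 : (4:ℕ) ^ (K+1) = 4 * 4 ^ K := by ring
    simp only [Nat.sub_self, pow_zero, mul_one]
    omega

lemma lang_subset (n : ℕ) (hn : 1 ≤ n) :
    { w ∈ LangOf myX | w.length = n } ⊆ ↑(coverF n (Nat.log 4 (2*n))) := by
  rintro w ⟨⟨x, hxX, p, hwe⟩, hlen⟩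
  set K := Nat.log 4 (2*n) with hK
  have hx1 := hxX.1
  obtain ⟨m, hm⟩ := hxX.2 (p + n)
  set t₀ := p + m with ht₀
  have hpow : ∀ i, i < n → x (p+i) = 1 → ∃ k, i + t₀ = 4 ^ k := by
    intro i hi h1
    obtain ⟨k, hk⟩ := hm (p+i) (by omega) h1
    exact ⟨k, by omega⟩
  have hwe' : w = List.ofFn fun i : Fin n => x (p + (i:ℕ)) := by
    rw [hwe]
    apply List.ext_getElem
    · simp [hlen]
    · intro i h1 h2
      simp
  set Sf := (Finset.range n).filter (fun i => x (p+i) = 1) with hSf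
  have hmemS : ∀ i, i ∈ Sf ↔ i < n ∧ x (p+i) = 1 := by
    intro i; simp [hSf]
  by_cases hbig : 2 ≤ Sf.card
  · -- many ones
    have hNE : Sf.Nonempty := Finset.card_pos.mp (by omega)
    set q₁ := Sf.min' hNE with hq₁
    have hq₁S : q₁ ∈ Sf := Finset.min'_mem _ _
    set κ : ℕ → ℕ := fun i => Nat.log 4 (i + t₀) with hκdef
    have hκ : ∀ i ∈ Sf, 4 ^ (κ i) = i + t₀ := by
      intro i hi
      obtain ⟨hi1, hi2⟩ := (hmemS i).mp hi
      obtain ⟨k, hk⟩ := hpow i hi1 hi2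
      rw [hκdef]; simp only
      rw [hk, Nat.log_pow (by norm_num)]
    have hk₁ : 4 ^ κ q₁ = q₁ + t₀ := hκ q₁ hq₁S
    have ht₀le : t₀ ≤ 4 ^ κ q₁ := by rw [hk₁]; omega
    obtain ⟨q₂, hq₂S, hq₂ne⟩ := Finset.exists_mem_ne (s := Sf) (by omega) q₁
    have hq₂gt : q₁ < q₂ := lt_of_le_of_ne (Finset.min'_le _ _ hq₂S) (Ne.symm hq₂ne)
    have hκgt : ∀ i ∈ Sf, q₁ < i → κ q₁ < κ i := by
      intro i hi hlt
      have h4 : 4 ^ κ q₁ < 4 ^ κ i := by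
        rw [hκ i hi, hk₁]; omega
      exact (pow_lt_pow_iff_right₀ (by norm_num)).mp h4
    have h3bound : 3 * 4 ^ κ q₁ + 1 ≤ n := by
      have h5 := hκgt q₂ hq₂S hq₂gt
      have h6 : 4 ^ (κ q₁ + 1) ≤ 4 ^ κ q₂ := Nat.pow_le_pow_right (by norm_num) h5
      have h7 : q₂ < n := ((hmemS q₂).mp hq₂S).1
      have h8 : 4 ^ κ q₂ = q₂ + t₀ := hκ q₂ hq₂S
      have h9 : 4 ^ (κ q₁ + 1) = 4 * 4 ^ κ q₁ := by ring
      omega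
    have hbound : ∀ i ∈ Sf, 4 ^ κ i ≤ 2 * n := by
      intro i hi
      by_cases hiq : i = q₁
      · subst hiq; omega
      · have hlt : q₁ < i := lt_of_le_of_ne (Finset.min'_le _ _ hi) (Ne.symm hiq)
        have h8 := hκ i hi
        have h7 : i < n := ((hmemS i).mp hi).1
        omega
    have hκK : ∀ i ∈ Sf, κ i ≤ K := by
      intro i hi
      rw [hK]
      exact (Nat.le_log_iff_pow_le (by norm_num) (by omega)).mpr (hbound i hi)
    set B := (Sf.erase q₁).image κ with hB
    have hBsub : B ⊆ Finset.Ioc (κ q₁) K := by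
      intro j hj
      rw [hB, Finset.mem_image] at hj
      obtain ⟨i, hi, rfl⟩ := hj
      have hi' := Finset.mem_of_mem_erase hi
      have hne := Finset.ne_of_mem_erase hi
      have hlt : q₁ < i := lt_of_le_of_ne (Finset.min'_le _ _ hi') (Ne.symm hne)
      exact Finset.mem_Ioc.mpr ⟨hκgt i hi' hlt, hκK i hi'⟩
    rw [Finset.mem_coe, coverF, Finset.mem_union]
    right
    rw [Finset.mem_biUnion]
    refine ⟨κ q₁, Finset.mem_range.mpr (by
      have := hκK q₂ hq₂S
      have := hκgt q₂ hq₂S hq₂gt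
      omega), ?_⟩
    rw [Finset.mem_image]
    refine ⟨(t₀, B), Finset.mem_product.mpr ⟨Finset.mem_range.mpr (by omega),
      Finset.mem_powerset.mpr hBsub⟩, ?_⟩
    rw [hwe', wordMany]
    congr 1
    funext i
    by_cases hxi : x (p + (i:ℕ)) = 1
    · have hiS : (i:ℕ) ∈ Sf := (hmemS i).mpr ⟨i.isLt, hxi⟩
      rw [if_pos, hxi]
      refine ⟨κ i, ?_, (hκ i hiS).symm⟩
      by_cases hiq : (i:ℕ) = q₁
      · rw [hiq]; exact Finset.mem_insert_self _ _
      · exact Finset.mem_insert_of_mem (Finset.mem_image_of_mem κ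
          (Finset.mem_erase.mpr ⟨hiq, hiS⟩))
    · rw [if_neg, eq_comm]
      · have := hx1 (p + (i:ℕ)); omega
      · rintro ⟨k, hkA, hke⟩
        rcases Finset.mem_insert.mp hkA with hk | hk
        · subst hk
          have hii : (i:ℕ) = q₁ := by omega
          rw [hii] at hxi
          exact hxi ((hmemS q₁).mp hq₁S).2
        · rw [hB, Finset.mem_image] at hk
          obtain ⟨i', hi', rfl⟩ := hk
          have hi'S := Finset.mem_of_mem_erase hi'
          have h8 := hκ i' hi'S
          have hii : (i:ℕ) = i' := by omega
          rw [hii] at hxi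
          exact hxi ((hmemS i').mp hi'S).2
  · -- at most one 1
    rw [Finset.mem_coe, coverF, Finset.mem_union]
    left
    rw [Finset.mem_image]
    have hle1 : Sf.card ≤ 1 := by omega
    rcases Finset.eq_empty_or_nonempty Sf with hS | hS
    · refine ⟨n, Finset.mem_range.mpr (by omega), ?_⟩
      rw [hwe', wordOne]
      congr 1
      funext i
      have hiS : (i:ℕ) ∉ Sf := by rw [hS]; exact Finset.notMem_empty _
      rw [hmemS] at hiS
      push_neg at hiS
      have hne : x (p + (i:ℕ)) ≠ 1 := hiS i.isLt
      have := hx1 (p + (i:ℕ))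
      rw [if_neg (by omega), eq_comm]
      omega
    · set q := Sf.min' hS with hq
      have hqS : q ∈ Sf := Finset.min'_mem _ _
      have huniq : ∀ i ∈ Sf, i = q := by
        intro i hi
        exact Finset.card_le_one.mp hle1 i hi q hqS
      refine ⟨q, Finset.mem_range.mpr (by have := ((hmemS q).mp hqS).1; omega), ?_⟩
      rw [hwe', wordOne]
      congr 1
      funext i
      by_cases hxi : x (p + (i:ℕ)) = 1
      · have hiS : (i:ℕ) ∈ Sf := (hmemS i).mpr ⟨i.isLt, hxi⟩
        rw [if_pos (huniq _ hiS), hxi]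
      · have hiq : (i:ℕ) ≠ q := by
          intro h
          rw [h] at hxi
          exact hxi ((hmemS q).mp hqS).2
        rw [if_neg hiq, eq_comm]
        have := hx1 (p + (i:ℕ)); omega

lemma count_bound (n : ℕ) : Set.ncard { w ∈ LangOf myX | w.length = n } ≤ 16 * n + 16 := by
  rcases Nat.eq_zero_or_pos n with rfl | hn
  · have hsub : { w ∈ LangOf myX | w.length = 0 } ⊆ {([] : List ℕ)} := by
      rintro w ⟨-, hl⟩
      exact Set.mem_singleton_iff.mpr (List.length_eq_zero_iff.mp hl)
    calc Set.ncard { w ∈ LangOf myX | w.length = 0 }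
        ≤ Set.ncard {([] : List ℕ)} := Set.ncard_le_ncard hsub (Set.finite_singleton _)
      _ = 1 := Set.ncard_singleton _
      _ ≤ 16 * 0 + 16 := by norm_num
  · set K := Nat.log 4 (2*n) with hK
    have h1 : Set.ncard { w ∈ LangOf myX | w.length = n } ≤ (coverF n K).card := by
      rw [← Set.ncard_coe_finset]
      exact Set.ncard_le_ncard (lang_subset n hn) (Finset.finite_toSet _)
    have h2 : (coverF n K).card ≤ (n+1) + 4 * 4 ^ K := by
      refine (Finset.card_union_le _ _).trans (add_le_add ?_ ?_)
      · exact Finset.card_image_le.trans (by simp)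
      · refine (Finset.card_biUnion_le).trans ?_
        refine le_trans (Finset.sum_le_sum (fun k₁ _ => ?_)) (sum_bound K)
        refine Finset.card_image_le.trans ?_
        rw [Finset.card_product, Finset.card_range, Finset.card_powerset, Nat.card_Ioc]
    have h3 : 4 ^ K ≤ 2 * n := Nat.pow_log_le_self 4 (by omega)
    omega

lemma myX_subshift :
    (∀ x ∈ myX, (fun n => x (n+1)) ∈ myX) ∧
    ∀ y : ℕ → ℕ, (∀ n : ℕ, ∃ x ∈ myX, ∀ i < n, y i = x i) → y ∈ myX := by
  constructor
  · rintro x ⟨hx1, hx2⟩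
    refine ⟨fun i => hx1 (i+1), fun N => ?_⟩
    obtain ⟨m, hm⟩ := hx2 (N+1)
    refine ⟨m+1, fun i hi h1 => ?_⟩
    obtain ⟨k, hk⟩ := hm (i+1) (by omega) h1
    exact ⟨k, by omega⟩
  · intro y hy
    constructor
    · intro i
      obtain ⟨x, hxX, hagree⟩ := hy (i+1)
      rw [hagree i (by omega)]
      exact hxX.1 i
    · intro N
      obtain ⟨x, hxX, hagree⟩ := hy N
      obtain ⟨m, hm⟩ := hxX.2 N
      refine ⟨m, fun i hi h1 => ?_⟩
      exact hm i hi (by rw [← hagree i hi]; exact h1)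

lemma myX_hereditary : ∀ y ∈ myX, ∀ x : ℕ → ℕ, (∀ i, x i ≤ y i) → x ∈ myX := by
  rintro y ⟨hy1, hy2⟩ x hxy
  refine ⟨fun i => (hxy i).trans (hy1 i), fun N => ?_⟩
  obtain ⟨m, hm⟩ := hy2 N
  refine ⟨m, fun i hi h1 => ?_⟩
  refine hm i hi ?_
  have := hxy i
  have := hy1 i
  omega

def yT (i : ℕ) : ℕ :=
  if i ∈ (Finset.range (i + 1)).image (fun k => 4 ^ k) then 1 else 0

lemma yT_mem : yT ∈ myX := by
  constructor
  · intro i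
    rw [yT]
    split <;> omega
  · intro N
    refine ⟨0, fun i hi h1 => ?_⟩
    rw [yT] at h1
    split at h1
    · obtain ⟨k, -, hk⟩ := Finset.mem_image.mp ‹i ∈ (Finset.range (i+1)).image (fun k => 4 ^ k)›
      exact ⟨k, by omega⟩
    · omega

lemma yT_pow (k : ℕ) : yT (4 ^ k) = 1 := by
  rw [yT, if_pos]
  refine Finset.mem_image.mpr ⟨k, Finset.mem_range.mpr ?_, rfl⟩
  have : k < 4 ^ k := Nat.lt_pow_self (by norm_num)
  omega

lemma myX_not_fcd : ¬ ∃ d : ℕ, ∀ y ∈ myX, ∀ F : Finset ℕ, ∑ i ∈ F, y i ≤ d := by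
  rintro ⟨d, hd⟩
  have hinj : Function.Injective (fun k : ℕ => 4 ^ k) := fun a b h =>
    Nat.pow_right_injective (by norm_num) h
  have := hd yT yT_mem ((Finset.range (d+1)).image (fun k => 4 ^ k))
  rw [Finset.sum_image (fun a _ b _ h => hinj h)] at this
  have heq : ∀ k ∈ Finset.range (d+1), yT (4 ^ k) = 1 := fun k _ => yT_pow k
  rw [Finset.sum_congr rfl heq, Finset.sum_const, Finset.card_range, smul_eq_mul, mul_one] at this
  omega

/-- There exists a hereditary subshift `X ⊆ {0,1}^ℕ` with sublinear factor
complexity and infinite coding dimension. -/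
theorem stmt7 :
    ∃ X : Set (ℕ → ℕ),
      IsSubshift X ∧
      (∀ x ∈ X, ∀ n : ℕ, x n ≤ 1) ∧
      (∀ y ∈ X, ∀ x : ℕ → ℕ, (∀ i, x i ≤ y i) → x ∈ X) ∧
      (∃ c : ℕ, ∀ n : ℕ, Set.ncard { w ∈ LangOf X | w.length = n } ≤ c * n + c) ∧
      ¬ FiniteCodingDim X := by
  refine ⟨myX, ?_, ?_, myX_hereditary, ⟨16, count_bound⟩, ?_⟩
  · exact myX_subshift
  · exact fun x hx n => hx.1 n
  · exact myX_not_fcd
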